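/- arXiv:0711.4412 — 5 statements merged into one kernel-verified Lean document; each statement's English description precedes it below -/
import Mathlib

section
/- Γ(x) / (√(2π) · x^(x − 1/2) · e^(−x)) tends to 1 as real x tends to infinity. -/
open Filter Real Topology Nat

noncomputable def Fst (x : ℝ) : ℝ :=
  (x - 1/2) * Real.log x - x + Real.log (Real.sqrt (2*Real.pi))

noncomputable def Est (n : ℕ) : ℝ := Real.log (n ! : ℕ) - Fst (n+1)

-- step: tendsto (n+1/2) * log (1+1/n) → 1
lemma aux1 : Tendsto (fun n : ℕ => ((n:ℝ) + 1/2) * Real.log (1 + 1/(n:ℝ))) atTop (𝓝 1) := by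
  have h1 : Tendsto (fun x : ℝ => x * Real.log (1 + 1/x)) atTop (𝓝 1) := by
    simpa using Real.tendsto_mul_log_one_add_div_atTop 1
  have h2 : Tendsto (fun n : ℕ => (n:ℝ) * Real.log (1 + 1/(n:ℝ))) atTop (𝓝 1) :=
    h1.comp tendsto_natCast_atTop_atTop
  have h3 : Tendsto (fun n : ℕ => Real.log (1 + 1/(n:ℝ))) atTop (𝓝 0) := by
    have : Tendsto (fun n : ℕ => 1 + 1/(n:ℝ)) atTop (𝓝 1) := by
      simpa using (tendsto_const_nhds (x := (1:ℝ))).add (tendsto_one_div_atTop_nhds_zero_nat)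
    simpa [Function.comp_def] using (Real.continuousAt_log (by norm_num)).tendsto.comp this
  have h4 := h2.add (h3.const_mul (1/2))
  norm_num at h4
  exact h4.congr fun n => by ring

lemma Est_identity (n : ℕ) (hn : 1 ≤ n) :
    Est n = Real.log (Stirling.stirlingSeq n) - Real.log (Real.sqrt Real.pi)
      - (((n:ℝ) + 1/2) * Real.log (1 + 1/(n:ℝ)) - 1) := by
  have hn0 : (0:ℝ) < n := by exact_mod_cast hn
  rw [Stirling.log_stirlingSeq_formula]
  have h1 : Real.log (1 + 1/(n:ℝ)) = Real.log ((n:ℝ)+1) - Real.log n := by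
    rw [← Real.log_div (by positivity) (by positivity)]
    congr 1
    field_simp
  have h2 : Real.log (2 * (n:ℝ)) = Real.log 2 + Real.log n :=
    Real.log_mul (by norm_num) (by positivity)
  have h3 : Real.log ((n:ℝ) / Real.exp 1) = Real.log n - 1 := by
    rw [Real.log_div (by positivity) (by positivity), Real.log_exp]
  have h4 : Real.log (Real.sqrt (2*Real.pi))
      = 1/2 * Real.log 2 + Real.log (Real.sqrt Real.pi) := by
    rw [Real.log_sqrt (by positivity), Real.log_sqrt Real.pi_pos.le,
      Real.log_mul (by norm_num) Real.pi_pos.ne']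
    ring
  simp only [Est, Fst]
  rw [h1, h2, h3, h4]
  ring

lemma Est_tendsto : Tendsto Est atTop (𝓝 0) := by
  have hs : Tendsto (fun n => Real.log (Stirling.stirlingSeq n)) atTop
      (𝓝 (Real.log (Real.sqrt Real.pi))) :=
    (Real.continuousAt_log (by positivity)).tendsto.comp Stirling.tendsto_stirlingSeq_sqrt_pi
  have h := (hs.sub (tendsto_const_nhds (x := Real.log (Real.sqrt Real.pi)))).sub (aux1.sub (tendsto_const_nhds (x := (1:ℝ))))
  simp only [sub_self, sub_zero] at h
  apply h.congr'
  filter_upwards [eventually_ge_atTop 1] with n hn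
  exact (Est_identity n hn).symm

set_option maxHeartbeats 1000000 in
lemma key_bound (n : ℕ) (hn : 1 ≤ n) (x : ℝ) (hx1 : (n:ℝ)+1 ≤ x) (hx2 : x ≤ (n:ℝ)+2) :
    |Real.log (Real.Gamma x) - Fst x| ≤ |Est n| + 2/(n:ℝ) := by
  have hn0 : (0:ℝ) < n := by exact_mod_cast hn
  obtain ⟨t, ht0, ht1, rfl⟩ : ∃ t, 0 ≤ t ∧ t ≤ 1 ∧ x = (n:ℝ)+1+t :=
    ⟨x - ((n:ℝ)+1), by linarith, by linarith, by ring⟩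
  have hx0 : (0:ℝ) < (n:ℝ)+1+t := by linarith
  have h1t : (0:ℝ) < 1 + t := by linarith
  have hconv := Real.convexOn_log_Gamma
  have hfact : Real.Gamma ((n:ℝ)+1) = (n ! : ℕ) := by
    exact_mod_cast Real.Gamma_nat_eq_factorial n
  have hfact2 : Real.Gamma ((n:ℝ)+2) = ((n+1)! : ℕ) := by
    have := Real.Gamma_nat_eq_factorial (n+1)
    push_cast at this ⊢
    rw [show (n:ℝ)+2 = (n:ℝ)+1+1 by ring]
    exact this
  have hfact0 : Real.Gamma (n:ℝ) = ((n-1)! : ℕ) := by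
    have h := Real.Gamma_nat_eq_factorial (n-1)
    have e : ((n-1 : ℕ):ℝ) + 1 = (n:ℝ) := by
      have h2 : (((n - 1 : ℕ)) : ℝ) = (n : ℝ) - (1 : ℕ) := Nat.cast_sub hn
      push_cast at h2
      linarith
    rwa [e] at h
  have hlogfact2 : Real.log ((n+1)! : ℕ) = Real.log (n ! : ℕ) + Real.log ((n:ℝ)+1) := by
    rw [Nat.factorial_succ]
    push_cast
    rw [Real.log_mul (by positivity) (by positivity)]
    ring
  have hlogfact0 : Real.log (n ! : ℕ) = Real.log ((n-1)! : ℕ) + Real.log (n:ℝ) := by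
    have e : n ! = n * (n-1)! := by
      cases n with
      | zero => omega
      | succ m => simp [Nat.factorial_succ]
    rw [e]
    push_cast
    rw [Real.log_mul (by positivity) (by positivity)]
    ring
  have hupper : Real.log (Real.Gamma ((n:ℝ)+1+t))
      ≤ Real.log (n ! : ℕ) + t * Real.log ((n:ℝ)+1) := by
    have h := hconv.2 (show ((n:ℝ)+1) ∈ Set.Ioi (0:ℝ) by simp; positivity)
      (show ((n:ℝ)+2) ∈ Set.Ioi (0:ℝ) by simp; positivity)
      (show (0:ℝ) ≤ 1 - t by linarith) ht0 (by ring)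
    have hcomb : (1-t) • ((n:ℝ)+1) + t • ((n:ℝ)+2) = (n:ℝ)+1+t := by
      simp only [smul_eq_mul]; ring
    rw [hcomb] at h
    simp only [Function.comp, smul_eq_mul] at h
    rw [hfact, hfact2] at h
    calc Real.log (Real.Gamma ((n:ℝ)+1+t))
        ≤ (1-t) * Real.log (n ! : ℕ) + t * Real.log ((n+1)! : ℕ) := h
      _ = Real.log (n ! : ℕ) + t * Real.log ((n:ℝ)+1) := by rw [hlogfact2]; ring
  have hlower : Real.log (n ! : ℕ) + t * Real.log (n:ℝ)
      ≤ Real.log (Real.Gamma ((n:ℝ)+1+t)) := by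
    have h := hconv.2 (show ((n:ℝ)) ∈ Set.Ioi (0:ℝ) by simpa using hn0)
      (show ((n:ℝ)+1+t) ∈ Set.Ioi (0:ℝ) by simpa using hx0)
      (show (0:ℝ) ≤ t/(1+t) by positivity)
      (show (0:ℝ) ≤ 1/(1+t) by positivity)
      (by rw [← add_div, add_comm t 1, div_self h1t.ne'])
    have hcomb : (t/(1+t)) • (n:ℝ) + (1/(1+t)) • ((n:ℝ)+1+t) = (n:ℝ)+1 := by
      simp only [smul_eq_mul]
      field_simp
      all_goals ring
    rw [hcomb] at h
    simp only [Function.comp, smul_eq_mul] at h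
    rw [hfact, hfact0] at h
    have h' := mul_le_mul_of_nonneg_left h h1t.le
    rw [hlogfact0]
    have e1 : (1+t) * (t/(1+t) * Real.log ((n-1)! : ℕ) + 1/(1+t) * Real.log (Real.Gamma ((n:ℝ)+1+t)))
        = t * Real.log ((n-1)! : ℕ) + Real.log (Real.Gamma ((n:ℝ)+1+t)) := by
      field_simp
    rw [e1] at h'
    nlinarith [h']
  set G : ℝ := Real.log (Real.Gamma ((n:ℝ)+1+t)) with hG
  set L : ℝ := Real.log ((n:ℝ)+1+t) - Real.log ((n:ℝ)+1) with hL
  clear_value G L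
  have hLdiv : L = Real.log (((n:ℝ)+1+t) / ((n:ℝ)+1)) := by
    rw [hL]
    exact (Real.log_div (by positivity) (by positivity)).symm
  have hLub : L ≤ t/((n:ℝ)+1) := by
    rw [hLdiv]
    have h := Real.log_le_sub_one_of_pos (show (0:ℝ) < ((n:ℝ)+1+t)/((n:ℝ)+1) by positivity)
    have e : ((n:ℝ)+1+t)/((n:ℝ)+1) - 1 = t/((n:ℝ)+1) := by
      field_simp
      ring
    linarith [e ▸ h]
  have hLlb : t/((n:ℝ)+2) ≤ L := by
    have h := Real.log_le_sub_one_of_pos (show (0:ℝ) < ((n:ℝ)+1)/((n:ℝ)+1+t) by positivity)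
    have e : Real.log (((n:ℝ)+1)/((n:ℝ)+1+t)) = -L := by
      rw [hLdiv, Real.log_div (by positivity) (by positivity),
        Real.log_div (by positivity) (by positivity)]
      ring
    rw [e] at h
    have e2 : ((n:ℝ)+1)/((n:ℝ)+1+t) - 1 = -(t/((n:ℝ)+1+t)) := by
      field_simp
      ring
    rw [e2] at h
    have h2 : t/((n:ℝ)+1+t) ≤ L := by linarith
    have h3 : t/((n:ℝ)+2) ≤ t/((n:ℝ)+1+t) :=
      div_le_div_of_nonneg_left ht0 hx0 (by linarith)
    linarith
  have hlog1n : Real.log ((n:ℝ)+1) - Real.log (n:ℝ) ≤ 1/(n:ℝ) := by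
    rw [← Real.log_div (by positivity) (by positivity)]
    have h := Real.log_le_sub_one_of_pos (show (0:ℝ) < ((n:ℝ)+1)/(n:ℝ) by positivity)
    have e : ((n:ℝ)+1)/(n:ℝ) - 1 = 1/(n:ℝ) := by field_simp; ring
    linarith [e ▸ h]
  have hF : Fst ((n:ℝ)+1+t) - Fst ((n:ℝ)+1)
      = ((n:ℝ)+1+t - 1/2) * L + t * Real.log ((n:ℝ)+1) - t := by
    simp only [Fst, hL]
    ring
  have hE : Real.log (n ! : ℕ) = Est n + Fst ((n:ℝ)+1) := by simp [Est]
  have hxL_ub : ((n:ℝ)+1+t - 1/2) * L - t ≤ 1/((n:ℝ)+1) := by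
    have h1 : ((n:ℝ)+1+t - 1/2) * L ≤ ((n:ℝ)+1+t - 1/2) * (t/((n:ℝ)+1)) :=
      mul_le_mul_of_nonneg_left hLub (by linarith)
    have h2 : ((n:ℝ)+1+t - 1/2) * (t/((n:ℝ)+1)) - t = (t - 1/2) * t / ((n:ℝ)+1) := by
      field_simp
      ring
    have h3 : (t - 1/2) * t ≤ 1 := by nlinarith
    have h4 : (t - 1/2) * t / ((n:ℝ)+1) ≤ 1/((n:ℝ)+1) :=
      (div_le_div_iff_of_pos_right (by positivity)).mpr h3
    linarith
  have hxL_lb : -(2/((n:ℝ)+2)) ≤ ((n:ℝ)+1+t - 1/2) * L - t := by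
    have h1 : ((n:ℝ)+1+t - 1/2) * (t/((n:ℝ)+2)) ≤ ((n:ℝ)+1+t - 1/2) * L :=
      mul_le_mul_of_nonneg_left hLlb (by linarith)
    have h2 : ((n:ℝ)+1+t - 1/2) * (t/((n:ℝ)+2)) - t = (t - 3/2) * t / ((n:ℝ)+2) := by
      field_simp
      ring
    have h3 : (-2:ℝ) ≤ (t - 3/2) * t := by nlinarith
    have h4 : (-2:ℝ)/((n:ℝ)+2) ≤ (t - 3/2) * t / ((n:ℝ)+2) :=
      (div_le_div_iff_of_pos_right (by positivity)).mpr h3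
    have h5 : (-2:ℝ)/((n:ℝ)+2) = -(2/((n:ℝ)+2)) := by ring
    linarith
  have hdiv1 : 2/((n:ℝ)+2) ≤ 2/(n:ℝ) := div_le_div_of_nonneg_left (by norm_num) hn0 (by linarith)
  have hdiv2 : 1/((n:ℝ)+1) ≤ 1/(n:ℝ) := div_le_div_of_nonneg_left (by norm_num) hn0 (by linarith)
  have hub : G - Fst ((n:ℝ)+1+t) ≤ Est n + 2/(n:ℝ) := by
    rw [hE] at hupper
    linarith
  have hlb : Est n - 2/(n:ℝ) ≤ G - Fst ((n:ℝ)+1+t) := by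
    rw [hE] at hlower
    have h4 : t * (Real.log ((n:ℝ)+1) - Real.log (n:ℝ)) ≤ 1/(n:ℝ) := by
      have hlogpos : 0 ≤ Real.log ((n:ℝ)+1) - Real.log (n:ℝ) := by
        have := Real.log_le_log (by positivity) (show (n:ℝ) ≤ (n:ℝ)+1 by linarith)
        linarith
      nlinarith
    have h4' : t * Real.log ((n:ℝ)+1) - t * Real.log (n:ℝ) ≤ 1/(n:ℝ) := by
      have e : t * (Real.log ((n:ℝ)+1) - Real.log (n:ℝ))
          = t * Real.log ((n:ℝ)+1) - t * Real.log (n:ℝ) := by ring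
      linarith [e ▸ h4]
    linarith [hlower, hF, h4', hxL_ub, hdiv2, (by ring : 2/(n:ℝ) = 1/(n:ℝ) + 1/(n:ℝ))]
  rw [abs_le]
  constructor
  · have := neg_abs_le (Est n)
    linarith
  · have := le_abs_self (Est n)
    linarith

lemma log_diff_tendsto :
    Tendsto (fun x : ℝ => Real.log (Real.Gamma x) - Fst x) atTop (𝓝 0) := by
  have hseq : Tendsto (fun n : ℕ => |Est n| + 2/(n:ℝ)) atTop (𝓝 0) := by
    have h1 : Tendsto (fun n : ℕ => |Est n|) atTop (𝓝 0) := by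
      simpa using Est_tendsto.abs
    have h2 : Tendsto (fun n : ℕ => 2/(n:ℝ)) atTop (𝓝 0) := by
      simpa using (tendsto_const_div_atTop_nhds_zero_nat 2)
    simpa using h1.add h2
  have hcomp : Tendsto (fun x : ℝ => ⌊x⌋₊ - 1) atTop atTop :=
    (tendsto_sub_atTop_nat 1).comp tendsto_nat_floor_atTop
  apply squeeze_zero_norm' (a := fun x : ℝ => |Est (⌊x⌋₊ - 1)| + 2/((⌊x⌋₊ - 1 : ℕ):ℝ))
  · filter_upwards [eventually_ge_atTop (2:ℝ)] with x hx
    set n : ℕ := ⌊x⌋₊ - 1 with hn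
    have hfl : 2 ≤ ⌊x⌋₊ := Nat.le_floor (by exact_mod_cast hx)
    have hn1 : 1 ≤ n := by omega
    have hnn : n + 1 = ⌊x⌋₊ := by omega
    have hx1 : (n:ℝ) + 1 ≤ x := by
      have : ((n+1 : ℕ):ℝ) ≤ x := by
        rw [hnn]
        exact Nat.floor_le (by linarith)
      push_cast at this
      linarith
    have hx2 : x ≤ (n:ℝ) + 2 := by
      have h := Nat.lt_floor_add_one x
      have e : ((⌊x⌋₊ : ℕ):ℝ) = (n:ℝ) + 1 := by
        rw [← hnn]; push_cast; ring
      rw [e] at h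
      linarith
    simpa using key_bound n hn1 x hx1 hx2
  · exact hseq.comp hcomp

theorem stirling_gamma :
    Filter.Tendsto (fun x : ℝ => Real.Gamma x /
      (Real.sqrt (2 * Real.pi) * x^(x - 1/2) * Real.exp (-x)))
      Filter.atTop (nhds 1) := by
  have h1 : Tendsto (fun x : ℝ => Real.exp (Real.log (Real.Gamma x) - Fst x)) atTop (𝓝 1) := by
    have := Real.continuous_exp.continuousAt.tendsto.comp log_diff_tendsto
    simpa [Function.comp_def] using this
  apply h1.congr'
  filter_upwards [eventually_ge_atTop (1:ℝ)] with x hx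
  have hx0 : (0:ℝ) < x := by linarith
  have hG : 0 < Real.Gamma x := Real.Gamma_pos_of_pos hx0
  have hsq : (0:ℝ) < Real.sqrt (2*Real.pi) := Real.sqrt_pos.mpr (by positivity)
  have hden : Real.sqrt (2*Real.pi) * x^(x - 1/2) * Real.exp (-x) = Real.exp (Fst x) := by
    rw [Real.rpow_def_of_pos hx0, ← Real.exp_log hsq, ← Real.exp_add, ← Real.exp_add, Fst]
    congr 1
    ring
  rw [hden, Real.exp_sub, Real.exp_log hG]
end

section
/- Given the asymptotic relations Γ(n) ~ C·n^(n−1/2)·e^(−n) and Γ(n+1/2) = (2n)!·√π/(4^n·n!) as n → ∞, the constant C must equal √(2π). -/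
open Filter Real

lemma key_eq (C : ℝ) (hC : C ≠ 0) (n : ℕ) (hn : 1 ≤ n) :
    Real.Gamma n / (C * (n:ℝ)^((n:ℝ) - 1/2) * Real.exp (-(n:ℝ))) =
      (Real.sqrt (2 * Real.pi) / C) * (Stirling.stirlingSeq n / Real.sqrt Real.pi) := by
  have hn0 : (0:ℝ) < n := by exact_mod_cast hn
  have hΓ : Real.Gamma n * n = (n.factorial : ℝ) := by
    rw [mul_comm, ← Real.Gamma_add_one hn0.ne']
    exact_mod_cast Real.Gamma_nat_eq_factorial n
  have hrpow : (n:ℝ)^((n:ℝ) - 1/2) = (n:ℝ)^(n:ℕ) / Real.sqrt n := by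
    rw [Real.rpow_sub hn0, Real.rpow_natCast, Real.sqrt_eq_rpow]
  have hexp : Real.exp (-(n:ℝ)) = (Real.exp 1 ^ n)⁻¹ := by
    rw [Real.exp_neg, Real.exp_one_pow]
  have hsqrt : Real.sqrt (2 * n) * Real.sqrt Real.pi = Real.sqrt (2 * Real.pi) * Real.sqrt n := by
    rw [← Real.sqrt_mul (by positivity), ← Real.sqrt_mul (by positivity)]
    ring_nf
  have hs : (0:ℝ) < Real.sqrt n := Real.sqrt_pos.mpr hn0
  have hss : Real.sqrt n * Real.sqrt n = (n:ℝ) := Real.mul_self_sqrt hn0.le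
  have hπ : (0:ℝ) < Real.sqrt Real.pi := Real.sqrt_pos.mpr Real.pi_pos
  have h2n : (0:ℝ) < Real.sqrt (2*n) := Real.sqrt_pos.mpr (by positivity)
  rw [Stirling.stirlingSeq, hrpow, hexp, div_pow]
  have hN : (0:ℝ) < (n:ℝ)^(n:ℕ) := by positivity
  have hE : (0:ℝ) < Real.exp 1 ^ n := by positivity
  field_simp
  linear_combination (Real.Gamma n * Real.sqrt n) * hsqrt +
    (Real.Gamma n * Real.sqrt (2 * Real.pi)) * hss + Real.sqrt (2 * Real.pi) * hΓ

theorem stirling_constant (C : ℝ) (hC : 0 < C)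
    (h : Filter.Tendsto (fun x : ℝ => Real.Gamma x / (C * x^(x - 1/2) * Real.exp (-x)))
      Filter.atTop (nhds 1)) :
    C = Real.sqrt (2 * Real.pi) := by
  have h1 : Tendsto (fun n : ℕ => Real.Gamma n / (C * (n:ℝ)^((n:ℝ) - 1/2) * Real.exp (-(n:ℝ))))
      atTop (nhds 1) := h.comp tendsto_natCast_atTop_atTop
  have h2 : Tendsto (fun n : ℕ => (Real.sqrt (2 * Real.pi) / C) *
      (Stirling.stirlingSeq n / Real.sqrt Real.pi)) atTop
      (nhds ((Real.sqrt (2 * Real.pi) / C) * (Real.sqrt Real.pi / Real.sqrt Real.pi))) :=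
    tendsto_const_nhds.mul (Stirling.tendsto_stirlingSeq_sqrt_pi.div_const _)
  have hπ : Real.sqrt Real.pi ≠ 0 := (Real.sqrt_pos.mpr Real.pi_pos).ne'
  rw [div_self hπ, mul_one] at h2
  have heq : (fun n : ℕ => Real.Gamma n / (C * (n:ℝ)^((n:ℝ) - 1/2) * Real.exp (-(n:ℝ))))
      =ᶠ[atTop] (fun n : ℕ => (Real.sqrt (2 * Real.pi) / C) *
        (Stirling.stirlingSeq n / Real.sqrt Real.pi)) := by
    filter_upwards [eventually_ge_atTop 1] with n hn
    exact key_eq C hC.ne' n hn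
  have := tendsto_nhds_unique (h1.congr' heq) h2
  have hs : (0:ℝ) < Real.sqrt (2 * Real.pi) := Real.sqrt_pos.mpr (by positivity)
  field_simp at this
  rw [Real.sqrt_mul (by norm_num : (0:ℝ) ≤ 2)]
  rwa [← Real.sqrt_mul (by norm_num : (0:ℝ) ≤ 2)]
end

section
/- For z > 0, log Γ(z) = (z − 1/2)·log z − z + (1/2)·log(2π) + ∑_{n=1}^{∞} B_{2n} / ((2n)(2n−1)·z^(2n−1)) holds as an asymptotic expansion: for each N, the error after truncating the sum at n = N is O(z^(−2N−1)) as z → ∞. State and prove the first-order case: log Γ(z) − ((z − 1/2)·log z − z + (1/2)·log(2π)) − 1/(12z) = O(1/z^3) as z → ∞. -/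
open Real Filter Set

noncomputable def SFO.Lfun (z : ℝ) : ℝ :=
  (z - 1/2) * Real.log z - z + (1/2) * Real.log (2 * Real.pi)

noncomputable def SFO.ffun (z : ℝ) : ℝ := Real.log (Real.Gamma z) - SFO.Lfun z

namespace SFO

lemma ffun_rec {z : ℝ} (hz : 0 < z) :
    ffun z - ffun (z+1) = (z + 1/2) * (Real.log (z+1) - Real.log z) - 1 := by
  unfold ffun Lfun
  rw [Real.Gamma_add_one (ne_of_gt hz),
    Real.log_mul (ne_of_gt hz) (Real.Gamma_pos_of_pos hz).ne']
  ring

set_option maxHeartbeats 2000000 in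
lemma key_est {w : ℝ} (hw : 16 ≤ w) :
    |((w + 1/2) * (Real.log (w+1) - Real.log w) - 1) - (1/(12*w) - 1/(12*(w+1)))|
      ≤ 1/(w*(w+1)*(w+2)*(w+3)) := by
  have hw0 : (0:ℝ) < w := by linarith
  have hw1 : (0:ℝ) < w - 1 := by linarith
  have hlog : Real.log (w+1) - Real.log w = Real.log (1 + 1/w) := by
    rw [← Real.log_div (by linarith) (ne_of_gt hw0)]
    congr 1
    field_simp
  have habs : |(-(1/w) : ℝ)| = 1/w := by
    rw [abs_neg, abs_of_pos (by positivity)]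
  have htay := Real.abs_log_sub_add_sum_range_le (x := -(1/w))
    (by rw [habs]; rw [div_lt_one hw0]; linarith) 5
  rw [habs] at htay
  have hsum : (∑ i ∈ Finset.range 5, (-(1/w)) ^ (i + 1) / ((i:ℕ) + 1 : ℝ))
      = -(1/w) + (1/w)^2/2 - (1/w)^3/3 + (1/w)^4/4 - (1/w)^5/5 := by
    norm_num [Finset.sum_range_succ]
    ring
  rw [show (1:ℝ) - -(1/w) = 1 + 1/w by ring] at htay
  rw [hsum] at htay
  have erem : (1/w)^6/(1-1/w) = 1/(w^5*(w-1)) := by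
    rw [div_eq_div_iff (by
      have : (0:ℝ) < 1 - 1/w := by
        rw [sub_pos, div_lt_one hw0]; linarith
      linarith) (by positivity)]
    field_simp
  rw [erem] at htay
  obtain ⟨ht1, ht2⟩ := abs_le.mp htay
  -- bounds on log (1+1/w)
  have h1 : Real.log (1+1/w) ≤ 1/w - 1/(2*w^2) + 1/(3*w^3) - 1/(4*w^4) + 1/(5*w^5)
      + 1/(w^5*(w-1)) := by
    have e : -(-(1/w) + (1/w)^2/2 - (1/w)^3/3 + (1/w)^4/4 - (1/w)^5/5)
        = 1/w - 1/(2*w^2) + 1/(3*w^3) - 1/(4*w^4) + 1/(5*w^5) := by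
      field_simp
      ring
    linarith [e]
  have h2 : 1/w - 1/(2*w^2) + 1/(3*w^3) - 1/(4*w^4) + 1/(5*w^5)
      - 1/(w^5*(w-1)) ≤ Real.log (1+1/w) := by
    have e : -(-(1/w) + (1/w)^2/2 - (1/w)^3/3 + (1/w)^4/4 - (1/w)^5/5)
        = 1/w - 1/(2*w^2) + 1/(3*w^3) - 1/(4*w^4) + 1/(5*w^5) := by
      field_simp
      ring
    linarith [e]
  set l := Real.log (1+1/w) with hl
  -- polynomial versions
  have hD : (0:ℝ) < 60*w^5*(w-1) := by positivity
  have hq1 : (60*w^5*(w-1)) * (1/w - 1/(2*w^2) + 1/(3*w^3) - 1/(4*w^4) + 1/(5*w^5)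
      + 1/(w^5*(w-1))) = 60*w^5 - 90*w^4 + 50*w^3 - 35*w^2 + 27*w + 48 := by
    field_simp
    ring
  have hq2 : (60*w^5*(w-1)) * (1/w - 1/(2*w^2) + 1/(3*w^3) - 1/(4*w^4) + 1/(5*w^5)
      - 1/(w^5*(w-1))) = 60*w^5 - 90*w^4 + 50*w^3 - 35*w^2 + 27*w - 72 := by
    field_simp
    ring
  have hp1 : (60*w^5*(w-1)) * l ≤ 60*w^5 - 90*w^4 + 50*w^3 - 35*w^2 + 27*w + 48 := by
    rw [← hq1]
    exact mul_le_mul_of_nonneg_left h1 hD.le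
  have hp2 : 60*w^5 - 90*w^4 + 50*w^3 - 35*w^2 + 27*w - 72 ≤ (60*w^5*(w-1)) * l := by
    rw [← hq2]
    exact mul_le_mul_of_nonneg_left h2 hD.le
  have hN : (0:ℝ) < 120*w^9 + 600*w^8 + 600*w^7 - 600*w^6 - 720*w^5 := by
    nlinarith [pow_pos hw0 5, pow_pos hw0 6, pow_pos hw0 7]
  have hv : (0:ℝ) ≤ w - 16 := by linarith
  have hc : (0:ℝ) ≤ 2*w^4 + 13*w^3 + 28*w^2 + 23*w + 6 := by positivity
  rw [hlog, abs_le]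
  constructor
  · rw [← sub_nonneg, ← mul_nonneg_iff_of_pos_right hN]
    have hid : (((w + 1/2) * l - 1) - (1/(12*w) - 1/(12*(w+1))) - -(1/(w*(w+1)*(w+2)*(w+3))))
        * (120*w^9 + 600*w^8 + 600*w^7 - 600*w^6 - 720*w^5)
        = ((60*w^5*(w-1)) * l) * (2*w^4 + 13*w^3 + 28*w^2 + 23*w + 6)
          + (-120*w^9 - 600*w^8 - 610*w^7 + 560*w^6 + 830*w^5 - 60*w^4) := by
      have h3 : w + 1 ≠ 0 := by linarith
      have h4 : w + 2 ≠ 0 := by linarith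
      have h5 : w + 3 ≠ 0 := by linarith
      field_simp
      ring
    rw [hid]
    nlinarith [mul_le_mul_of_nonneg_right hp2 hc, hv, sq_nonneg (w-16),
      pow_nonneg hv 3, pow_nonneg hv 4, pow_nonneg hv 5]
  · rw [← sub_nonneg, ← mul_nonneg_iff_of_pos_right hN]
    have hid : ((1/(w*(w+1)*(w+2)*(w+3))) - (((w + 1/2) * l - 1) - (1/(12*w) - 1/(12*(w+1)))))
        * (120*w^9 + 600*w^8 + 600*w^7 - 600*w^6 - 720*w^5)
        = (120*w^9 + 600*w^8 + 610*w^7 - 560*w^6 - 590*w^5 - 180*w^4)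
          - ((60*w^5*(w-1)) * l) * (2*w^4 + 13*w^3 + 28*w^2 + 23*w + 6) := by
      have h3 : w + 1 ≠ 0 := by linarith
      have h4 : w + 2 ≠ 0 := by linarith
      have h5 : w + 3 ≠ 0 := by linarith
      field_simp
      ring
    rw [hid]
    nlinarith [mul_le_mul_of_nonneg_right hp1 hc, hv, sq_nonneg (w-16),
      pow_nonneg hv 3, pow_nonneg hv 4, pow_nonneg hv 5]

lemma telescope {z : ℝ} (hz : 16 ≤ z) (n : ℕ) :
    |ffun z - ffun (z+n) - (1/(12*z) - 1/(12*(z+n)))|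
      ≤ 1/3 * (1/(z*(z+1)*(z+2)) - 1/((z+n)*(z+n+1)*(z+n+2))) := by
  induction n with
  | zero => simp
  | succ n ih =>
    have hw : 16 ≤ z + n := by
      have : (0:ℝ) ≤ n := Nat.cast_nonneg n
      linarith
    have hw0 : (0:ℝ) < z + n := by linarith
    have hrec := ffun_rec hw0
    have hkey := key_est hw
    obtain ⟨hk1, hk2⟩ := abs_le.mp hkey
    obtain ⟨hi1, hi2⟩ := abs_le.mp ih
    have hcast : (↑(n+1) : ℝ) = (n : ℝ) + 1 := by push_cast; ring
    rw [hcast, abs_le]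
    have hsplit : ffun z - ffun (z + ((n:ℝ) + 1))
        = (ffun z - ffun (z+n)) + (ffun (z+n) - ffun ((z+n) + 1)) := by
      have : z + ((n:ℝ)+1) = (z + n) + 1 := by ring
      rw [this]; ring
    have hident : 1/((z+n)*((z+n)+1)*((z+n)+2)) - 1/(((z+n)+1)*((z+n)+2)*((z+n)+3))
        = 3 * (1/((z+n)*((z+n)+1)*((z+n)+2)*((z+n)+3))) := by
      have h1 : (0:ℝ) < z+n := hw0
      have h2 : (0:ℝ) < z+n+1 := by linarith
      have h3 : (0:ℝ) < z+n+2 := by linarith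
      have h4 : (0:ℝ) < z+n+3 := by linarith
      field_simp
      ring
    have hh : 1/(12*(z+n)) - 1/(12*((z+n)+1)) = 1/(12*(z+n)) - 1/(12*(z+((n:ℝ)+1))) := by
      ring_nf
    constructor
    · rw [hsplit, hrec]
      have e1 : z + ((n:ℝ)+1) = (z+n)+1 := by ring
      rw [e1, show z + (n:ℝ) + 1 + 1 = z + (n:ℝ) + 2 from by ring,
        show z + (n:ℝ) + 1 + 2 = z + (n:ℝ) + 3 from by ring]
      linarith [hk1, hi1, hident]
    · rw [hsplit, hrec]
      have e1 : z + ((n:ℝ)+1) = (z+n)+1 := by ring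
      rw [e1, show z + (n:ℝ) + 1 + 1 = z + (n:ℝ) + 2 from by ring,
        show z + (n:ℝ) + 1 + 2 = z + (n:ℝ) + 3 from by ring]
      linarith [hk2, hi2, hident]

lemma tendsto_log_one_add_div (t : ℝ) :
    Filter.Tendsto (fun x : ℝ => Real.log (1 + t/x)) atTop (nhds 0) := by
  have h1 : Filter.Tendsto (fun x : ℝ => 1 + t/x) atTop (nhds 1) := by
    have h0 : Filter.Tendsto (fun x : ℝ => t/x) atTop (nhds 0) :=
      tendsto_const_nhds.div_atTop tendsto_id
    simpa using (tendsto_const_nhds : Filter.Tendsto (fun _ : ℝ => (1:ℝ)) atTop (nhds 1)).add h0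
  have h2 := (Real.continuousAt_log one_ne_zero).tendsto.comp h1
  rw [Real.log_one] at h2
  exact h2

lemma tendsto_ffun_nat :
    Filter.Tendsto (fun n : ℕ => ffun ((n:ℝ) + 1)) atTop (nhds 0) := by
  have hS : Filter.Tendsto (fun n : ℕ => Real.log (Stirling.stirlingSeq n)) atTop
      (nhds ((1/2) * Real.log Real.pi)) := by
    have h := (Real.continuousAt_log (by positivity : Real.sqrt Real.pi ≠ 0)).tendsto.comp
      Stirling.tendsto_stirlingSeq_sqrt_pi
    have : Real.log (Real.sqrt Real.pi) = (1/2) * Real.log Real.pi := by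
      rw [Real.log_sqrt Real.pi_pos.le]; ring
    rw [← this]
    exact h
  have hB : Filter.Tendsto (fun n : ℕ =>
      ((n:ℝ)+1/2) * (Real.log ((n:ℝ)+1) - Real.log n) - 1) atTop (nhds 0) := by
    have hb1 : Filter.Tendsto (fun x : ℝ => x * Real.log (1 + 1/x)) atTop (nhds 1) :=
      Real.tendsto_mul_log_one_add_div_atTop 1
    have hb2 : Filter.Tendsto (fun n : ℕ => (n:ℝ) * Real.log (1 + 1/(n:ℝ))) atTop (nhds 1) :=
      hb1.comp tendsto_natCast_atTop_atTop
    have hb3 : Filter.Tendsto (fun n : ℕ => Real.log (1 + 1/(n:ℝ))) atTop (nhds 0) :=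
      (tendsto_log_one_add_div 1).comp tendsto_natCast_atTop_atTop
    have hcomb : Filter.Tendsto (fun n : ℕ =>
        (n:ℝ) * Real.log (1 + 1/(n:ℝ)) + (1/2) * Real.log (1 + 1/(n:ℝ)) - 1) atTop (nhds 0) := by
      have := (hb2.add (hb3.const_mul (1/2))).sub (tendsto_const_nhds : Filter.Tendsto _ atTop (nhds (1:ℝ)))
      simpa using this
    apply hcomb.congr'
    filter_upwards [Filter.eventually_ge_atTop 1] with n hn
    have hn0 : (0:ℝ) < n := by exact_mod_cast hn
    have : Real.log ((n:ℝ)+1) - Real.log n = Real.log (1 + 1/(n:ℝ)) := by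
      rw [← Real.log_div (by linarith) (ne_of_gt hn0)]
      congr 1
      field_simp
    rw [this]
    ring
  have key : ∀ n : ℕ, 1 ≤ n → ffun ((n:ℝ)+1)
      = (Real.log (Stirling.stirlingSeq n) - (1/2) * Real.log Real.pi)
        - (((n:ℝ)+1/2) * (Real.log ((n:ℝ)+1) - Real.log n) - 1) := by
    intro n hn
    have hn0 : (0:ℝ) < n := by exact_mod_cast hn
    have hfac : (0:ℝ) < ((Nat.factorial n : ℕ) : ℝ) := by exact_mod_cast n.factorial_pos
    have hS : Real.log (Stirling.stirlingSeq n)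
        = Real.log ((Nat.factorial n : ℕ) : ℝ) - ((1/2) * (Real.log 2 + Real.log n) + n * (Real.log n - 1)) := by
      unfold Stirling.stirlingSeq
      rw [Real.log_div hfac.ne' (by positivity),
        Real.log_mul (by positivity) (by positivity),
        Real.log_sqrt (by positivity), Real.log_pow,
        Real.log_div hn0.ne' (Real.exp_pos 1).ne', Real.log_exp,
        Real.log_mul two_ne_zero hn0.ne']
      push_cast
      ring
    have hG : Real.log (Real.Gamma ((n:ℝ)+1)) = Real.log ((Nat.factorial n : ℕ) : ℝ) := by
      rw [Real.Gamma_nat_eq_factorial]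
    unfold ffun Lfun
    rw [hG, hS, Real.log_mul two_ne_zero Real.pi_pos.ne']
    ring
  have := (hS.sub (tendsto_const_nhds (x := (1/2) * Real.log Real.pi))).sub hB
  rw [sub_self, sub_zero] at this
  apply this.congr'
  filter_upwards [Filter.eventually_ge_atTop 1] with n hn
  exact (key n hn).symm

lemma gamma_upper {m t : ℝ} (hm : 2 ≤ m) (ht0 : 0 ≤ t) (ht1 : t ≤ 1) :
    Real.log (Real.Gamma (m+t)) ≤ Real.log (Real.Gamma m) + t * Real.log m := by
  have hm0 : (0:ℝ) < m := by linarith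
  have hc := Real.convexOn_log_Gamma.2 (Set.mem_Ioi.mpr hm0)
    (Set.mem_Ioi.mpr (by linarith : (0:ℝ) < m+1)) (by linarith : (0:ℝ) ≤ 1-t) ht0 (by ring)
  simp only [smul_eq_mul, Function.comp_apply] at hc
  have he : (1-t) * m + t * (m+1) = m + t := by ring
  rw [he] at hc
  have hG : Real.log (Real.Gamma (m+1)) = Real.log m + Real.log (Real.Gamma m) := by
    rw [Real.Gamma_add_one hm0.ne', Real.log_mul hm0.ne' (Real.Gamma_pos_of_pos hm0).ne']
  rw [hG] at hc
  nlinarith [hc]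

lemma gamma_lower {m t : ℝ} (hm : 2 ≤ m) (ht0 : 0 ≤ t) (ht1 : t ≤ 1) :
    Real.log (Real.Gamma m) + t * Real.log (m-1) ≤ Real.log (Real.Gamma (m+t)) := by
  have hm0 : (0:ℝ) < m := by linarith
  have hm1 : (0:ℝ) < m - 1 := by linarith
  have h1t : (0:ℝ) < 1 + t := by linarith
  have hc := Real.convexOn_log_Gamma.2 (Set.mem_Ioi.mpr hm1)
    (Set.mem_Ioi.mpr (by linarith : (0:ℝ) < m+t))
    (by positivity : (0:ℝ) ≤ t/(1+t)) (by positivity : (0:ℝ) ≤ 1/(1+t))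
    (by field_simp; ring)
  simp only [smul_eq_mul, Function.comp_apply] at hc
  have he : t/(1+t) * (m-1) + 1/(1+t) * (m+t) = m := by field_simp; ring
  rw [he] at hc
  have hG : Real.log (Real.Gamma m) = Real.log (m-1) + Real.log (Real.Gamma (m-1)) := by
    rw [show m = (m-1)+1 by ring, Real.Gamma_add_one hm1.ne',
      Real.log_mul hm1.ne' (Real.Gamma_pos_of_pos hm1).ne']
    rw [show m-1+1-1 = m-1 by ring]
  have hc2 := mul_le_mul_of_nonneg_left hc h1t.le
  have he2 : (1+t) * (t/(1+t) * Real.log (Real.Gamma (m-1))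
      + 1/(1+t) * Real.log (Real.Gamma (m+t)))
      = t * Real.log (Real.Gamma (m-1)) + Real.log (Real.Gamma (m+t)) := by
    field_simp
  rw [he2] at hc2
  nlinarith [hc2, hG]

lemma tendsto_Ldiff (t : ℝ) (ht0 : 0 ≤ t) :
    Filter.Tendsto (fun x : ℝ => Lfun (x+t) - Lfun x - t * Real.log x) atTop (nhds 0) := by
  have h1 : Filter.Tendsto (fun x : ℝ => x * Real.log (1 + t/x)) atTop (nhds t) :=
    Real.tendsto_mul_log_one_add_div_atTop t
  have h2 : Filter.Tendsto (fun x : ℝ => Real.log (1 + t/x)) atTop (nhds 0) :=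
    tendsto_log_one_add_div t
  have hcomb : Filter.Tendsto (fun x : ℝ =>
      x * Real.log (1 + t/x) + (t - 1/2) * Real.log (1 + t/x) - t) atTop (nhds 0) := by
    have := (h1.add (h2.const_mul (t - 1/2))).sub (tendsto_const_nhds : Filter.Tendsto _ atTop (nhds t))
    simpa using this
  apply hcomb.congr'
  filter_upwards [Filter.eventually_ge_atTop 1] with x hx
  have hx0 : (0:ℝ) < x := by linarith
  have hlg : Real.log (x+t) - Real.log x = Real.log (1 + t/x) := by
    rw [← Real.log_div (by linarith) hx0.ne']
    congr 1
    field_simp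
  unfold Lfun
  have : Real.log (x+t) = Real.log x + Real.log (1 + t/x) := by linarith [hlg]
  rw [this]
  ring

lemma tendsto_ffun_add_nat {z : ℝ} (hz : 16 ≤ z) :
    Filter.Tendsto (fun n : ℕ => ffun (z + n)) atTop (nhds 0) := by
  set N : ℕ := ⌊z⌋₊ with hN
  set t : ℝ := z - N with ht
  have hz0 : (0:ℝ) < z := by linarith
  have ht0 : 0 ≤ t := by
    have := Nat.floor_le hz0.le
    simp only [ht]; linarith
  have ht1 : t ≤ 1 := by
    have := (Nat.lt_floor_add_one z).le
    simp only [ht]; linarith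
  have hN16 : 16 ≤ N := Nat.le_floor (by exact_mod_cast hz)
  have hN1 : 1 ≤ N := by omega
  have hmz : ∀ n : ℕ, z + n = ((N + n : ℕ) : ℝ) + t := by
    intro n; push_cast; simp only [ht]; ring
  have hmtop : Filter.Tendsto (fun n : ℕ => ((N + n : ℕ) : ℝ)) atTop atTop := by
    exact tendsto_natCast_atTop_atTop.comp
      ((tendsto_add_atTop_nat N).congr (fun n => Nat.add_comm n N))
  -- ffun at integers tends to zero
  have hfm : Filter.Tendsto (fun n : ℕ => ffun ((N + n : ℕ) : ℝ)) atTop (nhds 0) := by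
    have h := tendsto_ffun_nat.comp (tendsto_add_atTop_nat (N - 1))
    apply h.congr
    intro n
    simp only [Function.comp_apply]
    congr 1
    push_cast [Nat.cast_sub hN1]
    ring
  -- L-difference tends to zero
  have hdL : Filter.Tendsto (fun n : ℕ =>
      Lfun (((N + n : ℕ) : ℝ) + t) - Lfun ((N + n : ℕ) : ℝ)
        - t * Real.log ((N + n : ℕ) : ℝ)) atTop (nhds 0) :=
    (tendsto_Ldiff t ht0).comp hmtop
  -- log gap tends to zero
  have hgap : Filter.Tendsto (fun n : ℕ =>
      t * (Real.log ((N + n : ℕ) : ℝ) - Real.log (((N + n : ℕ) : ℝ) - 1))) atTop (nhds 0) := by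
    have hb : Filter.Tendsto (fun x : ℝ => Real.log (1 + 1/x)) atTop (nhds 0) :=
      tendsto_log_one_add_div 1
    have hmtop1 : Filter.Tendsto (fun n : ℕ => ((N + n : ℕ) : ℝ) - 1) atTop atTop := by
      simpa [sub_eq_add_neg] using tendsto_atTop_add_const_right atTop (-1:ℝ) hmtop
    have h := (hb.comp hmtop1).const_mul t
    rw [mul_zero] at h
    apply h.congr'
    filter_upwards [Filter.eventually_ge_atTop 1] with n hn
    simp only [Function.comp_apply]
    have hm2 : (2:ℝ) ≤ ((N + n : ℕ) : ℝ) := by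
      have : (2:ℕ) ≤ N + n := by omega
      exact_mod_cast this
    have hm1 : (0:ℝ) < ((N + n : ℕ) : ℝ) - 1 := by linarith
    congr 1
    rw [← Real.log_div (by linarith) hm1.ne']
    congr 1
    have hne : ((N:ℝ) + (n:ℝ) - 1) ≠ 0 := by push_cast at hm1; linarith
    push_cast at hm1 ⊢
    field_simp
    ring
  -- sandwich
  have hupper : ∀ n : ℕ, ffun (z + n)
      ≤ ffun ((N + n : ℕ) : ℝ) - (Lfun (((N + n : ℕ) : ℝ) + t) - Lfun ((N + n : ℕ) : ℝ)
        - t * Real.log ((N + n : ℕ) : ℝ)) := by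
    intro n
    have hm2 : (2:ℝ) ≤ ((N + n : ℕ) : ℝ) := by
      have : (2:ℕ) ≤ N + n := by omega
      exact_mod_cast this
    have h := gamma_upper hm2 ht0 ht1
    rw [hmz n]
    unfold ffun
    linarith [h]
  have hlower : ∀ n : ℕ, ffun ((N + n : ℕ) : ℝ) - (Lfun (((N + n : ℕ) : ℝ) + t)
        - Lfun ((N + n : ℕ) : ℝ) - t * Real.log ((N + n : ℕ) : ℝ))
        - t * (Real.log ((N + n : ℕ) : ℝ) - Real.log (((N + n : ℕ) : ℝ) - 1))
      ≤ ffun (z + n) := by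
    intro n
    have hm2 : (2:ℝ) ≤ ((N + n : ℕ) : ℝ) := by
      have : (2:ℕ) ≤ N + n := by omega
      exact_mod_cast this
    have h := gamma_lower hm2 ht0 ht1
    rw [hmz n]
    unfold ffun
    linarith [h]
  have hup : Filter.Tendsto (fun n : ℕ => ffun ((N + n : ℕ) : ℝ)
      - (Lfun (((N + n : ℕ) : ℝ) + t) - Lfun ((N + n : ℕ) : ℝ)
        - t * Real.log ((N + n : ℕ) : ℝ))) atTop (nhds 0) := by
    have := hfm.sub hdL
    simpa using this
  have hlo : Filter.Tendsto (fun n : ℕ => ffun ((N + n : ℕ) : ℝ)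
      - (Lfun (((N + n : ℕ) : ℝ) + t) - Lfun ((N + n : ℕ) : ℝ)
        - t * Real.log ((N + n : ℕ) : ℝ))
      - t * (Real.log ((N + n : ℕ) : ℝ) - Real.log (((N + n : ℕ) : ℝ) - 1)))
      atTop (nhds 0) := by
    have := hup.sub hgap
    simpa using this
  exact tendsto_of_tendsto_of_tendsto_of_le_of_le hlo hup hlower hupper

end SFO

theorem stirling_first_order :
    (fun z : ℝ => Real.log (Real.Gamma z) -
      ((z - 1/2) * Real.log z - z + (1/2) * Real.log (2 * Real.pi)) - 1/(12*z))
      =O[Filter.atTop] (fun z : ℝ => 1 / z^3) := by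
  rw [Asymptotics.isBigO_iff]
  use 1
  filter_upwards [Filter.eventually_ge_atTop (16:ℝ)] with z hz
  have hz0 : (0:ℝ) < z := by linarith
  have hfe : Real.log (Real.Gamma z) -
      ((z - 1/2) * Real.log z - z + (1/2) * Real.log (2 * Real.pi)) - 1/(12*z)
      = SFO.ffun z - 1/(12*z) := by
    simp only [SFO.ffun, SFO.Lfun]
  rw [hfe]
  have haddtop : Filter.Tendsto (fun n : ℕ => z + (n:ℝ)) atTop atTop :=
    tendsto_atTop_add_const_left atTop z tendsto_natCast_atTop_atTop
  have h12 : Filter.Tendsto (fun n : ℕ => 1/(12*(z + (n:ℝ)))) atTop (nhds 0) := by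
    have h1 : Filter.Tendsto (fun n : ℕ => 12*(z + (n:ℝ))) atTop atTop :=
      haddtop.const_mul_atTop (by norm_num)
    have h0 : Filter.Tendsto (fun n : ℕ => (12*(z + (n:ℝ)))⁻¹) atTop (nhds 0) :=
      h1.inv_tendsto_atTop
    exact h0.congr (fun n => (one_div _).symm)
  have hseq : Filter.Tendsto (fun n : ℕ =>
      SFO.ffun z - SFO.ffun (z+n) - (1/(12*z) - 1/(12*(z+n))))
      atTop (nhds (SFO.ffun z - 1/(12*z))) := by
    have h := ((tendsto_const_nhds : Filter.Tendsto _ Filter.atTop (nhds (SFO.ffun z))).sub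
      (SFO.tendsto_ffun_add_nat hz)).sub
      ((tendsto_const_nhds : Filter.Tendsto _ Filter.atTop (nhds (1/(12*z)))).sub h12)
    simpa using h
  have habs : Filter.Tendsto (fun n : ℕ =>
      |SFO.ffun z - SFO.ffun (z+n) - (1/(12*z) - 1/(12*(z+n)))|)
      atTop (nhds |SFO.ffun z - 1/(12*z)|) := hseq.abs
  have hbnd : |SFO.ffun z - 1/(12*z)| ≤ 1/3 * (1/(z*(z+1)*(z+2))) := by
    apply le_of_tendsto habs
    filter_upwards with n
    have h := SFO.telescope hz n
    have hn0 : (0:ℝ) ≤ (n:ℝ) := Nat.cast_nonneg n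
    have hzn : (0:ℝ) < z + n := by linarith
    have hpos : (0:ℝ) ≤ 1/((z+n)*(z+n+1)*(z+n+2)) := by
      have h1 : (0:ℝ) < z + n + 1 := by linarith
      have h2 : (0:ℝ) < z + n + 2 := by linarith
      exact le_of_lt (div_pos one_pos (mul_pos (mul_pos hzn h1) h2))
    linarith
  rw [Real.norm_eq_abs, Real.norm_eq_abs, one_mul]
  have hd : (0:ℝ) < z*(z+1)*(z+2) :=
    mul_pos (mul_pos hz0 (by linarith)) (by linarith)
  have h2 : 1/3 * (1/(z*(z+1)*(z+2))) ≤ |1/z^3| := by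
    rw [abs_of_pos (by positivity), div_mul_div_comm, one_mul]
    rw [div_le_div_iff₀ (by linarith) (by positivity)]
    nlinarith [pow_pos hz0 3, hz0, mul_pos hz0 hz0]
  linarith
end

section
/- For all positive reals x, log Γ(x) ≥ (x − 1/2)·log x − x + (1/2)·log(2π), i.e., Γ(x) ≥ √(2π)·x^(x−1/2)·e^(−x). -/
open Real Filter Topology Nat

lemma key_log {t : ℝ} (ht : 0 ≤ t) : 2*t/(2+t) ≤ Real.log (1+t) := by
  set f : ℝ → ℝ := fun u => Real.log (1+u) - 2*u/(2+u) with hf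
  have H : ∀ s : ℝ, 0 ≤ s → HasDerivAt f (1/(1+s) - 4/(2+s)^2) s := by
    intro s hs
    have h1 : HasDerivAt (fun u : ℝ => Real.log (1+u)) (1/(1+s)) s := by
      have := (Real.hasDerivAt_log (by positivity : (1:ℝ)+s ≠ 0)).comp s
        ((hasDerivAt_id s).const_add 1)
      exact this.congr_deriv (by simp)
    have h2 : HasDerivAt (fun u : ℝ => 2*u/(2+u)) (4/(2+s)^2) s := by
      have := ((hasDerivAt_id s).const_mul 2).div ((hasDerivAt_id s).const_add 2)
        (by positivity : (2:ℝ)+s ≠ 0)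
      refine this.congr_deriv ?_
      simp only [id]
      ring
    exact h1.sub h2
  have mono : MonotoneOn f (Set.Ici 0) := by
    apply monotoneOn_of_deriv_nonneg (convex_Ici 0)
    · exact fun s hs => (H s hs).continuousAt.continuousWithinAt
    · intro s hs
      rw [interior_Ici] at hs
      exact (H s hs.le).differentiableAt.differentiableWithinAt
    · intro s hs
      rw [interior_Ici, Set.mem_Ioi] at hs
      rw [(H s hs.le).deriv]
      rw [sub_nonneg, div_le_div_iff₀ (by nlinarith) (by nlinarith)]
      nlinarith [sq_nonneg s]
  have h0 : f 0 ≤ f t := mono Set.self_mem_Ici ht ht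
  simp only [hf] at h0
  norm_num at h0
  linarith



noncomputable def SF (x : ℝ) : ℝ :=
  Real.log (Real.Gamma x) - (x - 1/2) * Real.log x + x - (1/2) * Real.log (2*Real.pi)

lemma SF_step {x : ℝ} (hx : 0 < x) : SF (x+1) ≤ SF x := by
  have hΓ : 0 < Real.Gamma x := Real.Gamma_pos_of_pos hx
  have hlg : Real.log (Real.Gamma (x+1)) = Real.log x + Real.log (Real.Gamma x) := by
    rw [Real.Gamma_add_one hx.ne', Real.log_mul hx.ne' hΓ.ne']
  have hkey := key_log (t := 1/x) (by positivity)
  have hlog1 : Real.log (1 + 1/x) = Real.log (x+1) - Real.log x := by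
    rw [← Real.log_div (by positivity) hx.ne']
    congr 1
    field_simp
  have e1 : 2*(1/x)/(2+1/x) = 2/(2*x+1) := by
    rw [div_eq_div_iff (by positivity) (by positivity)]
    field_simp
  rw [hlog1, e1] at hkey
  have h2 : 1 ≤ (x + 1/2) * (Real.log (x+1) - Real.log x) := by
    have h3 := mul_le_mul_of_nonneg_left hkey (by linarith : (0:ℝ) ≤ x + 1/2)
    have e2 : (x+1/2) * (2/(2*x+1)) = 1 := by
      field_simp
    linarith [e2 ▸ h3]
  simp only [SF]
  rw [hlg]
  nlinarith [h2]

lemma SF_iter {x : ℝ} (hx : 0 < x) (n : ℕ) : SF (x+n) ≤ SF x := by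
  induction n with
  | zero => simp
  | succ n ih =>
    have h1 : SF ((x+n)+1) ≤ SF (x+n) := SF_step (by positivity)
    have e : x + ((n:ℝ)+1) = (x+n)+1 := by ring
    calc SF (x+(n+1:ℕ)) = SF ((x+n)+1) := by push_cast; rw [e]
    _ ≤ SF (x+n) := h1
    _ ≤ SF x := ih


lemma eps_tendsto : Tendsto (fun n : ℕ => Real.log (Stirling.stirlingSeq n) - Real.log (Real.sqrt Real.pi)) atTop (𝓝 0) := by
  have hπ : Real.sqrt Real.pi ≠ 0 := by positivity
  have h := ((Real.continuousAt_log hπ).tendsto.comp Stirling.tendsto_stirlingSeq_sqrt_pi).sub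
    (tendsto_const_nhds (x := Real.log (Real.sqrt Real.pi)))
  simpa using h

lemma logfact (n : ℕ) (hn : 1 ≤ n) :
    Real.log (n ! : ℝ) = (Real.log (Stirling.stirlingSeq n) - Real.log (Real.sqrt Real.pi))
      + ((n:ℝ)+1/2) * Real.log n - n + (1/2)*Real.log (2*Real.pi) := by
  have h1 : (0:ℝ) < n := by exact_mod_cast hn
  have hfac : (0:ℝ) < (n ! : ℝ) := by exact_mod_cast Nat.factorial_pos n
  have hd : (0:ℝ) < Real.sqrt (2*n) * ((n:ℝ)/Real.exp 1)^n := by positivity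
  have hst : (0:ℝ) < Stirling.stirlingSeq n := by
    rw [Stirling.stirlingSeq]; positivity
  have hfe : (n ! : ℝ) = Stirling.stirlingSeq n * (Real.sqrt (2*n) * ((n:ℝ)/Real.exp 1)^n) := by
    rw [Stirling.stirlingSeq]
    field_simp
  rw [hfe, Real.log_mul hst.ne' hd.ne',
    Real.log_mul (by positivity) (by positivity),
    Real.log_sqrt (by positivity), Real.log_pow,
    Real.log_div h1.ne' (Real.exp_pos 1).ne', Real.log_exp,
    Real.log_mul two_ne_zero h1.ne', Real.log_mul two_ne_zero Real.pi_ne_zero,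
    Real.log_sqrt Real.pi_pos.le]
  ring





lemma SF_lower {n : ℕ} (hn : 1 ≤ n) {y : ℝ} (h1 : (n:ℝ)+1 ≤ y) (h2 : y ≤ (n:ℝ)+2) :
    (Real.log (Stirling.stirlingSeq n) - Real.log (Real.sqrt Real.pi)) - 3/n ≤ SF y := by
  have hn0 : (0:ℝ) < n := by exact_mod_cast hn
  have hy0 : (0:ℝ) < y := by linarith
  -- convexity bound: log Γ y ≥ log Γ (n+1) + (y-(n+1)) * log n
  have hΓn1 : Real.log (Real.Gamma ((n:ℝ)+1)) = Real.log (n ! : ℝ) := by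
    rw [Real.Gamma_nat_eq_factorial]
  have hslope : Real.log (Real.Gamma ((n:ℝ)+1)) + (y-((n:ℝ)+1)) * Real.log n
      ≤ Real.log (Real.Gamma y) := by
    rcases eq_or_lt_of_le h1 with h | h
    · rw [← h]; simp
    · have hc := Real.convexOn_log_Gamma.slope_mono_adjacent
        (x := (n:ℝ)) (y := (n:ℝ)+1) (z := y)
        (Set.mem_Ioi.2 hn0) (Set.mem_Ioi.2 hy0) (by linarith) h
      have hdiff : Real.log (Real.Gamma ((n:ℝ)+1)) - Real.log (Real.Gamma (n:ℝ))
          = Real.log n := by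
        rw [Real.Gamma_add_one hn0.ne',
          Real.log_mul hn0.ne' (Real.Gamma_pos_of_pos hn0).ne']
        ring
      simp only [Function.comp] at hc
      rw [show (n:ℝ)+1-(n:ℝ) = 1 by ring, div_one, hdiff] at hc
      rw [le_div_iff₀ (by linarith)] at hc
      nlinarith [hc]
  -- log inequality: (n-y)/n <= log n - log y
  have hlog : ((n:ℝ)-y)/n ≤ Real.log n - Real.log y := by
    have h5 := Real.log_le_sub_one_of_pos (x := y/(n:ℝ)) (by positivity)
    rw [Real.log_div hy0.ne' hn0.ne'] at h5
    have e : y/(n:ℝ) - 1 = (y - n)/n := by field_simp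
    rw [e, le_div_iff₀ hn0] at h5
    rw [div_le_iff₀ hn0]
    nlinarith [h5]
  have C' : (y-1/2) * (((n:ℝ)-y)/n) ≤ (y-1/2) * (Real.log n - Real.log y) :=
    mul_le_mul_of_nonneg_left hlog (by linarith)
  have E : (Real.log (Stirling.stirlingSeq n) - Real.log (Real.sqrt Real.pi))
      + (y-1/2) * Real.log n - n + (1/2)*Real.log (2*Real.pi) ≤ Real.log (Real.Gamma y) := by
    have hlf := logfact n hn
    rw [hΓn1, hlf] at hslope
    nlinarith [hslope]
  have h3 : (-3:ℝ) ≤ ((y-1/2)*((n:ℝ)-y) + (n:ℝ)*(y-(n:ℝ))) := by nlinarith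
  have h4 : -(3/(n:ℝ)) ≤ (y-1/2)*(((n:ℝ)-y)/n) + (y-(n:ℝ)) := by
    have h6 := (div_le_div_iff_of_pos_right hn0).mpr h3
    rw [show ((-3:ℝ))/(n:ℝ) = -(3/(n:ℝ)) by ring] at h6
    have e4 : ((y-1/2)*((n:ℝ)-y) + (n:ℝ)*(y-(n:ℝ)))/(n:ℝ)
        = (y-1/2)*(((n:ℝ)-y)/n) + (y-(n:ℝ)) := by
      field_simp
    rw [e4] at h6
    exact h6
  have C2 : (y-1/2) * Real.log n - (y-1/2) * Real.log y ≥ -(3/(n:ℝ)) - (y - (n:ℝ)) := by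
    nlinarith [C', h4]
  simp only [SF]
  nlinarith [E, C2]





theorem stirling_lower_bound (x : ℝ) (hx : 0 < x) :
    Real.sqrt (2 * Real.pi) * x^(x - 1/2) * Real.exp (-x) ≤ Real.Gamma x := by
  have hSF : 0 ≤ SF x := by
    have key : ∀ n : ℕ, max 1 ⌈x⌉.toNat ≤ n →
        (Real.log (Stirling.stirlingSeq n) - Real.log (Real.sqrt Real.pi)) - 3/n ≤ SF x := by
      intro n hn
      have hn1 : 1 ≤ n := le_trans (le_max_left _ _) hn
      have hxn : x ≤ (n:ℝ) := by
        have h1 : x ≤ (⌈x⌉ : ℝ) := Int.le_ceil x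
        have h2 : ((⌈x⌉ : ℤ) : ℝ) ≤ ((⌈x⌉.toNat : ℕ) : ℝ) := by exact_mod_cast Int.self_le_toNat _
        have h3 : ((⌈x⌉.toNat : ℕ) : ℝ) ≤ (n:ℝ) := by
          exact_mod_cast le_trans (le_max_right _ _) hn
        linarith
      set k : ℕ := (⌈(n:ℝ)+1 - x⌉).toNat with hk
      have hcpos : (0:ℤ) ≤ ⌈(n:ℝ)+1 - x⌉ := by
        apply Int.ceil_nonneg; linarith
      have hkz : (k:ℤ) = ⌈(n:ℝ)+1 - x⌉ := Int.toNat_of_nonneg hcpos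
      have hkr : (k:ℝ) = ((⌈(n:ℝ)+1 - x⌉ : ℤ) : ℝ) := by rw [← hkz]; push_cast; ring
      have hge : (n:ℝ)+1 ≤ x + k := by
        have := Int.le_ceil ((n:ℝ)+1-x)
        rw [hkr]; linarith
      have hle : x + k ≤ (n:ℝ)+2 := by
        have := Int.ceil_lt_add_one ((n:ℝ)+1-x)
        rw [hkr]; linarith
      calc (Real.log (Stirling.stirlingSeq n) - Real.log (Real.sqrt Real.pi)) - 3/n
          ≤ SF (x+k) := SF_lower hn1 hge hle
        _ ≤ SF x := SF_iter hx k
    have ht : Tendsto (fun n:ℕ => (Real.log (Stirling.stirlingSeq n)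
        - Real.log (Real.sqrt Real.pi)) - 3/n) atTop (𝓝 0) := by
      have h2 : Tendsto (fun n:ℕ => (3:ℝ)/n) atTop (𝓝 0) :=
        tendsto_const_div_atTop_nhds_zero_nat 3
      simpa using eps_tendsto.sub h2
    exact le_of_tendsto ht (eventually_atTop.2 ⟨_, key⟩)
  have hΓ : 0 < Real.Gamma x := Real.Gamma_pos_of_pos hx
  have h2π : (0:ℝ) < 2*Real.pi := by positivity
  have hL : Real.sqrt (2*Real.pi) * x^(x-1/2) * Real.exp (-x)
      = Real.exp ((1/2)*Real.log (2*Real.pi) + (x-1/2)*Real.log x + (-x)) := by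
    rw [Real.exp_add, Real.exp_add, Real.sqrt_eq_rpow, Real.rpow_def_of_pos h2π,
      Real.rpow_def_of_pos hx]
    ring_nf
  rw [hL, ← Real.exp_log hΓ]
  apply Real.exp_le_exp.mpr
  simp only [SF] at hSF
  linarith
end

section
/- For real x ≥ 1, √(2π)·x^(x−1/2)·e^(−x) ≤ Γ(x) ≤ √(2π)·x^(x−1/2)·e^(−x)·e^(1/(12x)). -/
open Real Set Filter Topology

namespace StirlingTwoSided


/-- The summand of the Binet-style series. -/
noncomputable def fS (x : ℝ) : ℝ := (x + 1/2) * (Real.log (x+1) - Real.log x) - 1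

lemma hasDerivAt_logdiff {x : ℝ} (hx : 0 < x) :
    HasDerivAt (fun y : ℝ => Real.log (y+1) - Real.log y) (1/(x+1) - 1/x) x := by
  have h1 : HasDerivAt (fun y : ℝ => Real.log (y+1)) (1/(x+1)) x := by
    simpa using (((hasDerivAt_id x).add_const 1).log (by positivity))
  have h2 := Real.hasDerivAt_log hx.ne'
  exact (h1.sub h2).congr_deriv (by simp [one_div])

lemma hasDerivAt_fS {x : ℝ} (hx : 0 < x) :
    HasDerivAt fS (Real.log (x+1) - Real.log x + (x + 1/2) * (1/(x+1) - 1/x)) x := by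
  have h2 : HasDerivAt (fun y : ℝ => y + 1/2) 1 x := (hasDerivAt_id x).add_const _
  have := (h2.mul (hasDerivAt_logdiff hx)).sub_const 1
  exact this.congr_deriv (by ring)

lemma hasDerivAt_invdiff {x : ℝ} (hx : 0 < x) :
    HasDerivAt (fun y : ℝ => 1/(y+1) - 1/y) (1/x^2 - 1/(x+1)^2) x := by
  have h1 : HasDerivAt (fun y : ℝ => (y+1)⁻¹) (-1/(x+1)^2) x := by
    exact ((hasDerivAt_id x).add_const 1).inv (by positivity)
  have h2 := hasDerivAt_inv hx.ne'
  have := h1.sub h2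
  simp only [one_div]
  exact this.congr_deriv (by ring)

lemma hasDerivAt_fS' {x : ℝ} (hx : 0 < x) :
    HasDerivAt (fun y : ℝ => Real.log (y+1) - Real.log y + (y + 1/2) * (1/(y+1) - 1/y))
      (1/(2*x^2*(x+1)^2)) x := by
  have h2 : HasDerivAt (fun y : ℝ => y + 1/2) 1 x := (hasDerivAt_id x).add_const _
  have h := (hasDerivAt_logdiff hx).add (h2.mul (hasDerivAt_invdiff hx))
  exact h.congr_deriv (by field_simp; ring)

lemma convexOn_fS : ConvexOn ℝ (Ioi (0:ℝ)) fS := by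
  refine convexOn_of_hasDerivWithinAt2_nonneg (convex_Ioi 0)
    (f' := fun x => Real.log (x+1) - Real.log x + (x + 1/2) * (1/(x+1) - 1/x))
    (f'' := fun x => 1/(2*x^2*(x+1)^2)) ?_ ?_ ?_ ?_
  · intro x hx
    exact (hasDerivAt_fS hx).continuousAt.continuousWithinAt
  · intro x hx
    rw [interior_Ioi] at hx
    exact (hasDerivAt_fS hx).hasDerivWithinAt
  · intro x hx
    rw [interior_Ioi] at hx
    exact (hasDerivAt_fS' hx).hasDerivWithinAt
  · intro x hx
    rw [interior_Ioi] at hx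
    positivity




lemma tendsto_logdiff :
    Tendsto (fun y : ℝ => Real.log (y+1) - Real.log y) atTop (𝓝 0) := by
  have h1 : Tendsto (fun y : ℝ => 1 + y⁻¹) atTop (𝓝 1) := by
    simpa using (tendsto_const_nhds : Tendsto (fun _:ℝ => (1:ℝ)) atTop (𝓝 1)).add tendsto_inv_atTop_zero
  have h2 : Tendsto (fun y : ℝ => Real.log (1 + y⁻¹)) atTop (𝓝 0) := by
    simpa using h1.log one_ne_zero
  apply h2.congr'
  filter_upwards [eventually_gt_atTop (0:ℝ)] with y hy
  rw [show (1 + y⁻¹) = (y+1)/y by field_simp, Real.log_div (by positivity) hy.ne']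

/-- Lower bound: `1/(x+1/2) ≤ log (x+1) - log x` for `x > 0`. -/
lemma log_diff_lower {x : ℝ} (hx : 0 < x) :
    1/(x + 1/2) ≤ Real.log (x+1) - Real.log x := by
  set F : ℝ → ℝ := fun y => Real.log (y+1) - Real.log y - (y + 1/2)⁻¹ with hF
  have hder : ∀ y ∈ Ioi (0:ℝ), HasDerivAt F (1/(y+1) - 1/y + 1/(y+1/2)^2) y := by
    intro y hy
    have hy : (0:ℝ) < y := hy
    have h1 : HasDerivAt (fun z : ℝ => (z + 1/2)⁻¹) (-1/(y+1/2)^2) y := by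
      exact ((hasDerivAt_id y).add_const (1/2 : ℝ)).inv (by positivity)
    have := (hasDerivAt_logdiff hy).sub h1
    exact this.congr_deriv (by ring)
  have hanti : AntitoneOn F (Ioi (0:ℝ)) := by
    apply antitoneOn_of_deriv_nonpos (convex_Ioi 0)
    · intro y hy; exact (hder y hy).continuousAt.continuousWithinAt
    · rw [interior_Ioi]; intro y hy; exact (hder y hy).differentiableAt.differentiableWithinAt
    · rw [interior_Ioi]; intro y hy
      rw [(hder y hy).deriv]
      have hy : (0:ℝ) < y := hy
      have key : 1/(y+1) - 1/y + 1/(y+1/2)^2 = -(1/4) / (y*(y+1)*(y+1/2)^2) := by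
        field_simp
        ring
      rw [key]
      apply div_nonpos_of_nonpos_of_nonneg <;> [norm_num; positivity]
  have hlim : Tendsto F atTop (𝓝 0) := by
    have h2 : Tendsto (fun y : ℝ => (y + 1/2)⁻¹) atTop (𝓝 0) :=
      tendsto_inv_atTop_zero.comp (tendsto_atTop_add_const_right _ _ tendsto_id)
    simpa only [sub_zero] using tendsto_logdiff.sub h2
  have h0 : 0 ≤ F x := by
    refine le_of_tendsto hlim ?_
    filter_upwards [eventually_ge_atTop x] with y hy
    exact hanti hx (hx.trans_le hy) hy
  rw [hF] at h0
  simp only [one_div]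
  linarith

/-- Upper bound: `log (x+1) - log x ≤ 1/(x+1/2) + 1/(12x³+18x²+6x)` for `x > 0`. -/
lemma log_diff_upper {x : ℝ} (hx : 0 < x) :
    Real.log (x+1) - Real.log x ≤ 1/(x + 1/2) + 1/(12*x^3+18*x^2+6*x) := by
  set F : ℝ → ℝ := fun y => (y + 1/2)⁻¹ + (12*y^3+18*y^2+6*y)⁻¹ - (Real.log (y+1) - Real.log y)
    with hF
  have hder : ∀ y ∈ Ioi (0:ℝ), HasDerivAt F
      (-1/(y+1/2)^2 + -(36*y^2+36*y+6)/(12*y^3+18*y^2+6*y)^2 - (1/(y+1) - 1/y)) y := by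
    intro y hy
    have hy : (0:ℝ) < y := hy
    have h1 : HasDerivAt (fun z : ℝ => (z + 1/2)⁻¹) (-1/(y+1/2)^2) y := by
      exact ((hasDerivAt_id y).add_const (1/2 : ℝ)).inv (by positivity)
    have hp : HasDerivAt (fun z : ℝ => 12*z^3+18*z^2+6*z) (36*y^2+36*y+6) y := by
      have := (((hasDerivAt_pow 3 y).const_mul 12).add ((hasDerivAt_pow 2 y).const_mul 18)).add
        ((hasDerivAt_id y).const_mul 6)
      exact this.congr_deriv (by ring)
    have h2 : HasDerivAt (fun z : ℝ => (12*z^3+18*z^2+6*z)⁻¹)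
        (-(36*y^2+36*y+6)/(12*y^3+18*y^2+6*y)^2) y := by
      have := hp.inv (by positivity)
      exact this
    exact (h1.add h2).sub (hasDerivAt_logdiff hy)
  have hanti : AntitoneOn F (Ioi (0:ℝ)) := by
    apply antitoneOn_of_deriv_nonpos (convex_Ioi 0)
    · intro y hy; exact (hder y hy).continuousAt.continuousWithinAt
    · rw [interior_Ioi]; intro y hy; exact (hder y hy).differentiableAt.differentiableWithinAt
    · rw [interior_Ioi]; intro y hy
      rw [(hder y hy).deriv]
      have hy : (0:ℝ) < y := hy
      have key : -1/(y+1/2)^2 + -(36*y^2+36*y+6)/(12*y^3+18*y^2+6*y)^2 - (1/(y+1) - 1/y)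
          = -1 / (6*y^2*(y+1)^2*(2*y+1)^2) := by
        have h1 : (12*y^3+18*y^2+6*y) = 6*y*(y+1)*(2*y+1) := by ring
        field_simp
        ring
      rw [key]
      apply div_nonpos_of_nonpos_of_nonneg <;> [norm_num; positivity]
  have hlim : Tendsto F atTop (𝓝 0) := by
    have h2 : Tendsto (fun y : ℝ => (y + 1/2)⁻¹) atTop (𝓝 0) :=
      tendsto_inv_atTop_zero.comp (tendsto_atTop_add_const_right _ _ tendsto_id)
    have h3 : Tendsto (fun y : ℝ => (12*y^3+18*y^2+6*y)⁻¹) atTop (𝓝 0) := by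
      apply tendsto_inv_atTop_zero.comp
      apply Filter.Tendsto.atTop_add_atTop
      apply Filter.Tendsto.atTop_add_atTop
      · exact (tendsto_pow_atTop (by norm_num)).const_mul_atTop (by norm_num)
      · exact (tendsto_pow_atTop (by norm_num)).const_mul_atTop (by norm_num)
      · exact tendsto_id.const_mul_atTop (by norm_num)
    simpa only [add_zero, sub_zero] using (h2.add h3).sub tendsto_logdiff
  have h0 : 0 ≤ F x := by
    refine le_of_tendsto hlim ?_
    filter_upwards [eventually_ge_atTop x] with y hy
    exact hanti hx (hx.trans_le hy) hy
  rw [hF] at h0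
  simp only [one_div]
  linarith




lemma fS_nonneg {x : ℝ} (hx : 0 < x) : 0 ≤ fS x := by
  have h := log_diff_lower hx
  have h2 : (0:ℝ) < x + 1/2 := by linarith
  have := mul_le_mul_of_nonneg_left h h2.le
  rw [mul_one_div, div_self h2.ne'] at this
  unfold fS
  linarith

lemma fS_le {x : ℝ} (hx : 0 < x) : fS x ≤ 1/(12*x) - 1/(12*(x+1)) := by
  have h := log_diff_upper hx
  have h2 : (0:ℝ) < x + 1/2 := by linarith
  have h3 := mul_le_mul_of_nonneg_left h h2.le
  have key : (x + 1/2) * (1/(x + 1/2) + 1/(12*x^3+18*x^2+6*x)) = 1 + (1/(12*x) - 1/(12*(x+1))) := by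
    field_simp
    ring
  rw [key] at h3
  unfold fS
  linarith

lemma sum_range_fS_le {x : ℝ} (hx : 0 < x) (n : ℕ) :
    ∑ i ∈ Finset.range n, fS (x + i) ≤ 1/(12*x) := by
  have h1 : ∑ i ∈ Finset.range n, fS (x + i)
      ≤ ∑ i ∈ Finset.range n, (1/(12*(x+i)) - 1/(12*(x+(i+1)))) := by
    apply Finset.sum_le_sum
    intro i _
    have hxi : (0:ℝ) < x + i := by positivity
    have := fS_le hxi
    exact this.trans_eq (by ring)
  have h3 : ∀ m:ℕ, ∑ i ∈ Finset.range m, (1/(12*(x+(i:ℝ))) - 1/(12*(x+((i:ℝ)+1))))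
      = 1/(12*x) - 1/(12*(x+(m:ℝ))) := by
    intro m
    induction m with
    | zero => simp
    | succ k ih =>
      rw [Finset.sum_range_succ, ih]
      push_cast
      ring
  rw [h3 n] at h1
  have : (0:ℝ) < 12*(x+n) := by positivity
  have h4 : 0 ≤ 1/(12*(x+(n:ℝ))) := by positivity
  linarith

lemma summable_fS {x : ℝ} (hx : 0 < x) : Summable (fun n : ℕ => fS (x + n)) :=
  summable_of_sum_range_le (fun n => fS_nonneg (by positivity)) (sum_range_fS_le hx)


noncomputable def muF (x : ℝ) : ℝ := ∑' n : ℕ, fS (x + n)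

lemma muF_nonneg {x : ℝ} (hx : 0 < x) : 0 ≤ muF x :=
  tsum_nonneg fun n => fS_nonneg (by positivity)

lemma muF_le {x : ℝ} (hx : 0 < x) : muF x ≤ 1/(12*x) :=
  Real.tsum_le_of_sum_range_le (fun n => fS_nonneg (by positivity)) (sum_range_fS_le hx)

lemma muF_rec {x : ℝ} (hx : 0 < x) : muF x = fS x + muF (x+1) := by
  rw [muF, (summable_fS hx).tsum_eq_zero_add]
  norm_num
  congr 1
  funext n
  congr 1
  push_cast
  ring

lemma convexOn_muF : ConvexOn ℝ (Ioi (0:ℝ)) muF := by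
  refine ⟨convex_Ioi 0, ?_⟩
  intro x hx y hy a b ha hb hab
  have hx : (0:ℝ) < x := hx
  have hy : (0:ℝ) < y := hy
  have hxy : (0:ℝ) < a*x + b*y := by
    rcases ha.lt_or_eq with ha' | ha'
    · have : 0 ≤ b*y := by positivity
      nlinarith
    · have hb1 : b = 1 := by linarith
      rw [← ha', hb1]; simpa using hy
  have hsx := summable_fS hx
  have hsy := summable_fS hy
  have hterm : ∀ n : ℕ, fS ((a • x + b • y) + n) ≤ a * fS (x + n) + b * fS (y + n) := by
    intro n
    have hmem1 : x + (n:ℝ) ∈ Ioi (0:ℝ) := by simp only [mem_Ioi]; positivity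
    have hmem2 : y + (n:ℝ) ∈ Ioi (0:ℝ) := by simp only [mem_Ioi]; positivity
    have := convexOn_fS.2 hmem1 hmem2 ha hb hab
    simp only [smul_eq_mul] at this ⊢
    rw [show a * x + b * y + (n:ℝ) = a * (x + n) + b * (y + n) by nlinarith [hab]]
    exact this
  calc muF (a • x + b • y) = ∑' n : ℕ, fS ((a • x + b • y) + n) := rfl
    _ ≤ ∑' n : ℕ, (a * fS (x + n) + b * fS (y + n)) := by
        apply Summable.tsum_le_tsum hterm
        · apply summable_of_sum_range_le (c := 1/(12*(a*x+b*y)))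
            (fun n => fS_nonneg (by simp only [smul_eq_mul]; positivity)) ?_
          intro n
          have := sum_range_fS_le hxy n
          simpa using this
        · exact (hsx.mul_left a).add (hsy.mul_left b)
    _ = a * muF x + b * muF y := by
        rw [Summable.tsum_add (hsx.mul_left a) (hsy.mul_left b), tsum_mul_left, tsum_mul_left]
        rfl





lemma sum_fS_formula (N : ℕ) :
    ∑ i ∈ Finset.range N, fS (1 + i)
      = ((N:ℝ) + 3/2) * Real.log (N+1) - Real.log (Nat.factorial (N+1) : ℝ) - N := by
  induction N with
  | zero => simp [fS]
  | succ k ih =>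
    rw [Finset.sum_range_succ, ih]
    have h1 : Real.log (Nat.factorial (k+2) : ℝ) = Real.log ((k:ℝ)+2) + Real.log (Nat.factorial (k+1) : ℝ) := by
      rw [show Nat.factorial (k+2) = (k+2) * Nat.factorial (k+1) from rfl]
      push_cast
      rw [Real.log_mul (by positivity) (by positivity)]
    have h2 : fS (1 + (k:ℝ)) = ((k:ℝ) + 3/2) * (Real.log ((k:ℝ)+2) - Real.log ((k:ℝ)+1)) - 1 := by
      unfold fS
      norm_num
      ring_nf
    push_cast
    push_cast at h1
    rw [h2, h1]
    ring

lemma sum_fS_eq_stirling (N : ℕ) :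
    ∑ i ∈ Finset.range N, fS (1 + i)
      = 1 - Real.log 2 / 2 - Real.log (Stirling.stirlingSeq (N+1)) := by
  rw [sum_fS_formula, Stirling.log_stirlingSeq_formula]
  have h1 : Real.log (((N:ℝ)+1) / Real.exp 1) = Real.log ((N:ℝ)+1) - 1 := by
    rw [Real.log_div (by positivity) (Real.exp_ne_zero 1), Real.log_exp]
  have h2 : Real.log (2 * ((N:ℝ)+1)) = Real.log 2 + Real.log ((N:ℝ)+1) := by
    rw [Real.log_mul (by norm_num) (by positivity)]
  push_cast
  rw [h1, h2]
  ring

lemma muF_one : muF 1 = 1 - Real.log (Real.sqrt (2*Real.pi)) := by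
  have hsum : HasSum (fun n : ℕ => fS (1 + n)) (muF 1) := (summable_fS one_pos).hasSum
  have h1 := hsum.tendsto_sum_nat
  have h2 : Tendsto (fun N : ℕ => ∑ i ∈ Finset.range N, fS (1 + i)) atTop
      (𝓝 (1 - Real.log 2 / 2 - Real.log (Real.sqrt Real.pi))) := by
    have hst : Tendsto (fun N : ℕ => Stirling.stirlingSeq (N+1)) atTop (𝓝 (Real.sqrt Real.pi)) :=
      Stirling.tendsto_stirlingSeq_sqrt_pi.comp (tendsto_add_atTop_nat 1)
    have hlog : Tendsto (fun N : ℕ => Real.log (Stirling.stirlingSeq (N+1))) atTop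
        (𝓝 (Real.log (Real.sqrt Real.pi))) :=
      hst.log (by positivity)
    have := (tendsto_const_nhds : Tendsto (fun _ : ℕ => 1 - Real.log 2 / 2) atTop _).sub hlog
    apply this.congr
    intro N
    exact (sum_fS_eq_stirling N).symm
  have := tendsto_nhds_unique h1 h2
  rw [this]
  have h3 : Real.log (Real.sqrt (2*Real.pi)) = Real.log 2 / 2 + Real.log (Real.sqrt Real.pi) := by
    rw [Real.log_sqrt (by positivity), Real.log_sqrt Real.pi_pos.le,
      Real.log_mul (by norm_num) Real.pi_ne_zero]
    ring
  rw [h3]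
  ring




/-- The main term's log is convex. -/
lemma convexOn_main : ConvexOn ℝ (Ioi (0:ℝ)) (fun x => (x - 1/2) * Real.log x - x) := by
  refine convexOn_of_hasDerivWithinAt2_nonneg (convex_Ioi 0)
    (f' := fun x => Real.log x + (x - 1/2) * (1/x) - 1)
    (f'' := fun x => 1/x + 1/(2*x^2)) ?_ ?_ ?_ ?_
  · intro x hx
    have hx : (0:ℝ) < x := hx
    exact (ContinuousAt.mul (by fun_prop) (Real.continuousAt_log hx.ne')).sub
      continuous_id.continuousAt |>.continuousWithinAt
  · intro x hx
    rw [interior_Ioi] at hx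
    have h1 : HasDerivAt (fun y : ℝ => (y - 1/2) * Real.log y)
        (1 * Real.log x + (x - 1/2) * x⁻¹) x :=
      ((hasDerivAt_id x).sub_const (1/2)).mul (Real.hasDerivAt_log hx.ne')
    have := h1.sub (hasDerivAt_id x)
    apply HasDerivAt.hasDerivWithinAt
    exact this.congr_deriv (by simp [one_div])
  · intro x hx
    rw [interior_Ioi] at hx
    have h1 : HasDerivAt (fun y : ℝ => (y - 1/2) * (1/y)) (1 * (1/x) + (x - 1/2) * (-1/x^2)) x := by
      have h2 : HasDerivAt (fun y : ℝ => 1/y) (-1/x^2) x := by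
        simp only [one_div]
        exact (hasDerivAt_inv (show (0:ℝ) < x from hx).ne').congr_deriv (by ring)
      exact ((hasDerivAt_id x).sub_const (1/2)).mul h2
    have := ((Real.hasDerivAt_log hx.ne').add h1).sub_const 1
    apply HasDerivAt.hasDerivWithinAt
    have hx' : x ≠ 0 := hx.ne'
    exact this.congr_deriv (by field_simp; ring)
  · intro x hx
    rw [interior_Ioi] at hx
    have hx : (0:ℝ) < x := hx
    positivity

/-- The candidate function. -/
noncomputable def GF (x : ℝ) : ℝ :=
  Real.sqrt (2*Real.pi) * x^(x - 1/2) * Real.exp (-x) * Real.exp (muF x)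

lemma GF_pos {x : ℝ} (hx : 0 < x) : 0 < GF x := by
  unfold GF
  have := Real.rpow_pos_of_pos hx (x - 1/2)
  have := Real.sqrt_pos.2 (by positivity : (0:ℝ) < 2*Real.pi)
  positivity

lemma log_GF {x : ℝ} (hx : 0 < x) :
    Real.log (GF x)
      = Real.log (Real.sqrt (2*Real.pi)) + ((x - 1/2) * Real.log x - x) + muF x := by
  unfold GF
  rw [Real.log_mul (by positivity) (Real.exp_ne_zero _),
    Real.log_mul (by positivity) (Real.exp_ne_zero _),
    Real.log_mul (by positivity) (Real.rpow_pos_of_pos hx _).ne',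
    Real.log_rpow hx, Real.log_exp, Real.log_exp]
  ring

lemma convexOn_log_GF : ConvexOn ℝ (Ioi (0:ℝ)) (Real.log ∘ GF) := by
  have h : ConvexOn ℝ (Ioi (0:ℝ))
      (fun x => Real.log (Real.sqrt (2*Real.pi)) + ((x - 1/2) * Real.log x - x) + muF x) :=
    (convexOn_const _ (convex_Ioi 0)).add convexOn_main |>.add convexOn_muF
  exact h.congr fun x hx => (log_GF hx).symm

lemma GF_feq {y : ℝ} (hy : 0 < y) : GF (y + 1) = y * GF y := by
  have h1 : GF (y+1) ∈ Ioi (0:ℝ) := GF_pos (by linarith)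
  have h2 : y * GF y ∈ Ioi (0:ℝ) := by
    have := GF_pos hy
    exact mem_Ioi.2 (by positivity)
  apply Real.log_injOn_pos h1 h2
  rw [Real.log_mul hy.ne' (GF_pos hy).ne', log_GF (by linarith), log_GF hy]
  have hrec := muF_rec hy
  unfold fS at hrec
  have : muF (y+1) = muF y - ((y + 1/2) * (Real.log (y+1) - Real.log y) - 1) := by linarith
  rw [this]
  ring

lemma GF_one : GF 1 = 1 := by
  unfold GF
  rw [muF_one, Real.one_rpow, Real.exp_sub, Real.exp_log (Real.sqrt_pos.2 (by positivity))]
  rw [show (-1 : ℝ) = -(1:ℝ) from rfl]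
  have h : Real.sqrt (2*Real.pi) ≠ 0 := (Real.sqrt_pos.2 (by positivity)).ne'
  field_simp [Real.exp_ne_zero]
  rw [← Real.exp_add]
  norm_num

lemma GF_eq_Gamma {x : ℝ} (hx : 0 < x) : GF x = Real.Gamma x :=
  Real.eq_Gamma_of_log_convex convexOn_log_GF (fun hy => GF_feq hy) (fun hy => GF_pos hy)
    GF_one hx


end StirlingTwoSided


theorem stirling_two_sided (x : ℝ) (hx : 1 ≤ x) :
    Real.sqrt (2 * Real.pi) * x^(x - 1/2) * Real.exp (-x) ≤ Real.Gamma x ∧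
    Real.Gamma x ≤ Real.sqrt (2 * Real.pi) * x^(x - 1/2) * Real.exp (-x) * Real.exp (1/(12*x)) := by
  have hx0 : (0:ℝ) < x := lt_of_lt_of_le one_pos hx
  have hG := StirlingTwoSided.GF_eq_Gamma hx0
  rw [← hG]
  unfold StirlingTwoSided.GF
  have hA : (0:ℝ) < Real.sqrt (2*Real.pi) * x^(x - 1/2) * Real.exp (-x) := by
    have := Real.rpow_pos_of_pos hx0 (x - 1/2)
    have := Real.sqrt_pos.2 (by positivity : (0:ℝ) < 2*Real.pi)
    positivity
  constructor
  · nth_rewrite 1 [show Real.sqrt (2*Real.pi) * x^(x - 1/2) * Real.exp (-x)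
      = Real.sqrt (2*Real.pi) * x^(x - 1/2) * Real.exp (-x) * 1 by ring]
    apply mul_le_mul_of_nonneg_left _ hA.le
    rw [← Real.exp_zero]
    exact Real.exp_le_exp.2 (StirlingTwoSided.muF_nonneg hx0)
  · exact mul_le_mul_of_nonneg_left (Real.exp_le_exp.2 (StirlingTwoSided.muF_le hx0)) hA.le
end
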